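/- Let F be a field of characteristic 0 and let G be a connected finite simple graph of order p and size q such that every pair of two distinct edges of G is the support of u² for some u : V(G) → F, but G is not edge-square over F. Then q = p or q = p + 1, and in the case q = p the graph G is a cycle of even length. -/

import Mathlib

/-- `edgeVal u e` is the sum of the values of `u` at the two endpoints of `e`,
written `λ_e(u)` in the paper. -/
def edgeVal {V F : Type*} [Field F] (u : V → F) : Sym2 V → F :=
  Sym2.lift ⟨fun x y => u x + u y, fun _ _ => add_comm _ _⟩

section aux

variable {V F : Type*} [Field F] {G : SimpleGraph V}

lemma edgeVal_mk (u : V → F) (x y : V) : edgeVal u s(x, y) = u x + u y := rfl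

lemma edgeVal_add (u v : V → F) (e : Sym2 V) :
    edgeVal (u + v) e = edgeVal u e + edgeVal v e := by
  induction e using Sym2.ind with
  | _ x y => simp only [edgeVal_mk, Pi.add_apply]; ring

lemma edgeVal_smul (a : F) (u : V → F) (e : Sym2 V) :
    edgeVal (a • u) e = a * edgeVal u e := by
  induction e using Sym2.ind with
  | _ x y => simp only [edgeVal_mk, Pi.smul_apply, smul_eq_mul]; ring

lemma edgeVal_single_of_mem [DecidableEq V] {v : V} {e : Sym2 V} (he : e ∈ G.edgeSet)
    (hv : v ∈ e) : edgeVal (Pi.single v (1 : F)) e = 1 := by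
  induction e using Sym2.ind with
  | _ x y =>
    have hxy : x ≠ y := G.ne_of_adj (G.mem_edgeSet.1 he)
    rw [Sym2.mem_iff] at hv
    rw [edgeVal_mk]
    rcases hv with rfl | rfl
    · simp [Pi.single_apply, hxy.symm]
    · simp [Pi.single_apply, hxy]

lemma edgeVal_single_of_not_mem [DecidableEq V] {v : V} {e : Sym2 V}
    (hv : v ∉ e) : edgeVal (Pi.single v (1 : F)) e = 0 := by
  induction e using Sym2.ind with
  | _ x y =>
    rw [Sym2.mem_iff] at hv
    push_neg at hv
    rw [edgeVal_mk]
    simp [Pi.single_apply, Ne.symm hv.1, Ne.symm hv.2]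

/-- last edge of a nonempty walk -/
lemma exists_last_edge : ∀ {a b : V} (q : G.Walk a b), q.length ≠ 0 →
    ∃ c, G.Adj c b ∧ s(c, b) ∈ q.edges := by
  intro a b q
  induction q with
  | nil => simp
  | @cons a x b h q ih =>
    intro _
    cases q with
    | nil => exact ⟨_, h, by simp⟩
    | @cons _ y _ h' q' =>
      obtain ⟨c, hc, hm⟩ := ih (by simp)
      exact ⟨c, hc, by
        rw [SimpleGraph.Walk.edges_cons]
        exact List.mem_cons_of_mem _ hm⟩

lemma cycle_two_edges {v : V} {c : G.Walk v v} (hc : c.IsCycle) :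
    ∃ a b, a ≠ b ∧ G.Adj v a ∧ G.Adj v b ∧ s(v, a) ∈ c.edges ∧ s(v, b) ∈ c.edges := by
  have h3 := hc.three_le_length
  cases c with
  | nil => simp at h3
  | @cons _ x _ h q =>
    obtain ⟨b, hb, hbm⟩ := exists_last_edge q (by
      rw [SimpleGraph.Walk.length_cons] at h3; omega)
    have hbm' : s(v, b) ∈ q.edges := Sym2.eq_swap ▸ hbm
    have hnodup : s(v, x) ∉ q.edges := by
      have := hc.edges_nodup
      rw [SimpleGraph.Walk.edges_cons] at this
      exact (List.nodup_cons.1 this).1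
    refine ⟨x, b, ?_, h, hb.symm, by simp, ?_⟩
    · rintro rfl
      exact hnodup hbm'
    · rw [SimpleGraph.Walk.edges_cons]
      exact List.mem_cons_of_mem _ hbm'

lemma cycle_two_edges_at [DecidableEq V] {v y : V} {c : G.Walk v v} (hc : c.IsCycle)
    (hy : y ∈ c.support) :
    ∃ a b, a ≠ b ∧ G.Adj y a ∧ G.Adj y b ∧ s(y, a) ∈ c.edges ∧ s(y, b) ∈ c.edges := by
  obtain ⟨a, b, hab, ha, hb, hma, hmb⟩ := cycle_two_edges (hc.rotate hy)
  exact ⟨a, b, hab, ha, hb,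
    ((SimpleGraph.Walk.rotate_edges c y hy).mem_iff).1 hma,
    ((SimpleGraph.Walk.rotate_edges c y hy).mem_iff).1 hmb⟩

lemma exists_boundary (S : Set V) : ∀ {a b : V} (p : G.Walk a b), a ∈ S → b ∉ S →
    ∃ y z, y ∈ S ∧ z ∉ S ∧ G.Adj y z := by
  intro a b p
  induction p with
  | nil => intro h h'; exact absurd h h'
  | @cons a x b h p ih =>
    intro ha hb
    by_cases h2 : x ∈ S
    · exact ih h2 hb
    · exact ⟨a, x, ha, h2, h⟩

lemma sign_along {u : V → F} (hu : ∀ ⦃x y : V⦄, G.Adj x y → u x + u y = 0) :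
    ∀ {a b : V} (p : G.Walk a b), u b = (-1) ^ p.length * u a := by
  intro a b p
  induction p with
  | nil => simp
  | @cons a x b h p ih =>
    rw [ih]
    have hx : u x = -u a := by linear_combination hu h
    rw [hx, SimpleGraph.Walk.length_cons, pow_succ]
    ring

end aux

/-- `G` is edge-square over `F`: every edge is exactly the support of a square `u²`. -/
def EdgeSquare {V : Type*} (F : Type*) [Field F] (G : SimpleGraph V) : Prop :=
  ∀ e ∈ G.edgeSet, ∃ u : V → F,
    {f : Sym2 V | f ∈ G.edgeSet ∧ edgeVal u f ≠ 0} = {e}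

/-- Every pair of distinct edges of `G` is the support of a square `u²`. -/
def PairSquare {V : Type*} (F : Type*) [Field F] (G : SimpleGraph V) : Prop :=
  ∀ e ∈ G.edgeSet, ∀ f ∈ G.edgeSet, e ≠ f → ∃ u : V → F,
    {g : Sym2 V | g ∈ G.edgeSet ∧ edgeVal u g ≠ 0} = {e, f}

open Module

theorem pair_square_classification
    {V F : Type*} [Fintype V] [DecidableEq V] [Field F] [CharZero F]
    (G : SimpleGraph V) [DecidableRel G.Adj]
    (hconn : G.Connected) (hps : PairSquare F G) (hnes : ¬ EdgeSquare F G) :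
    (G.edgeFinset.card = Fintype.card V ∨
        G.edgeFinset.card = Fintype.card V + 1) ∧
      (G.edgeFinset.card = Fintype.card V →
        ∃ (v : V) (w : G.Walk v v), w.IsCycle ∧ Even w.length ∧
          (∀ x : V, x ∈ w.support) ∧ (∀ e ∈ G.edgeSet, e ∈ w.edges)) := by
  classical
  haveI : Nonempty V := hconn.nonempty
  -- the linear map u ↦ (λ_e(u))_e
  let Λ : (V → F) →ₗ[F] (↥G.edgeSet → F) :=
    { toFun := fun u e => edgeVal u (e : Sym2 V)
      map_add' := fun u v => funext fun e => edgeVal_add u v (e : Sym2 V)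
      map_smul' := fun a u => funext fun e => edgeVal_smul a u (e : Sym2 V) }
  have hΛapp : ∀ (u : V → F) (e : ↥G.edgeSet), Λ u e = edgeVal u (e : Sym2 V) :=
    fun _ _ => rfl
  have hdim : finrank F (↥G.edgeSet → F) = G.edgeFinset.card := by
    rw [finrank_pi]
    exact SimpleGraph.edgeFinset_card.symm
  set W : Submodule F (↥G.edgeSet → F) := LinearMap.range Λ with hWdef
  -- W ≠ ⊤, else edge-square
  have hWtop : W ≠ ⊤ := by
    intro htop
    apply hnes
    intro e he
    have hmem : Pi.single (⟨e, he⟩ : ↥G.edgeSet) (1 : F) ∈ W := htop ▸ Submodule.mem_top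
    obtain ⟨u, hu⟩ := hmem
    refine ⟨u, ?_⟩
    ext f
    simp only [Set.mem_setOf_eq, Set.mem_singleton_iff]
    constructor
    · rintro ⟨hf, hne⟩
      by_contra hfe
      have : Λ u ⟨f, hf⟩ = 0 := by
        rw [hu]
        exact Pi.single_eq_of_ne (fun h => hfe (congrArg Subtype.val h)) 1
      exact hne (by rw [← hΛapp u ⟨f, hf⟩, this])
    · rintro rfl
      refine ⟨he, ?_⟩
      have : Λ u ⟨f, he⟩ = 1 := by rw [hu]; simp
      rw [← hΛapp u ⟨f, he⟩, this]
      exact one_ne_zero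
  set ann : Submodule F (Module.Dual F (↥G.edgeSet → F)) := W.dualAnnihilator with hanndef
  have hsum : finrank F ↥ann + finrank F ↥W = G.edgeFinset.card := by
    rw [← hdim, ← Submodule.finrank_quotient_add_finrank W]
    congr 1
    exact (LinearEquiv.finrank_eq (Subspace.quotEquivAnnihilator W)).symm
  have hannpos : 0 < finrank F ↥ann := by
    have h1 : finrank F ↥W < G.edgeFinset.card := by
      rw [← hdim]
      exact Submodule.finrank_lt hWtop
    omega
  obtain ⟨φ, hφann, hφ0⟩ : ∃ φ ∈ ann, φ ≠ 0 := by
    apply Submodule.exists_mem_ne_zero_of_ne_bot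
    intro h
    rw [h] at hannpos
    simp [finrank_bot] at hannpos
  -- coordinates of a dual vector
  set d : Module.Dual F (↥G.edgeSet → F) → ↥G.edgeSet → F :=
    fun ψ e => ψ (Pi.single e 1) with hddef
  have hrepr : ∀ (ψ : Module.Dual F (↥G.edgeSet → F)) (w : ↥G.edgeSet → F),
      ψ w = ∑ e, w e * d ψ e := by
    intro ψ w
    conv_lhs => rw [← Finset.univ_sum_single w]
    rw [map_sum]
    refine Finset.sum_congr rfl fun e _ => ?_
    have hsingle : Pi.single e (w e) = w e • (Pi.single e (1 : F) : ↥G.edgeSet → F) := by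
      ext j
      by_cases h : j = e
      · subst h; simp
      · simp [Pi.single_eq_of_ne h]
    rw [hsingle, map_smul, smul_eq_mul]
  have hannsum : ∀ ψ ∈ ann, ∀ u : V → F,
      ∑ e : ↥G.edgeSet, edgeVal u (e : Sym2 V) * d ψ e = 0 := by
    intro ψ hψ u
    have h1 : ψ (Λ u) = 0 :=
      (Submodule.mem_dualAnnihilator ψ).1 hψ (Λ u) ⟨u, rfl⟩
    rw [hrepr ψ (Λ u)] at h1
    exact h1
  -- full support of annihilator coordinates
  have hfullsupp : ∀ ψ ∈ ann, ∀ e : ↥G.edgeSet, d ψ e ≠ 0 → ∀ f, d ψ f ≠ 0 := by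
    intro ψ hψ e he f hf0
    by_cases hef : e = f
    · exact he (hef ▸ hf0)
    have hne : (e : Sym2 V) ≠ (f : Sym2 V) := fun h => hef (Subtype.ext h)
    obtain ⟨u, hu⟩ := hps (e : Sym2 V) e.2 (f : Sym2 V) f.2 hne
    have hsum0 := hannsum ψ hψ u
    rw [Finset.sum_eq_single e] at hsum0
    · have heval : edgeVal u (e : Sym2 V) ≠ 0 := by
        have : (e : Sym2 V) ∈ {g : Sym2 V | g ∈ G.edgeSet ∧ edgeVal u g ≠ 0} := by
          rw [hu]; left; rfl
        exact this.2
      exact heval (by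
        rcases mul_eq_zero.1 hsum0 with h | h
        · exact h
        · exact absurd h he)
    · intro g _ hg
      by_cases hgf : g = f
      · subst hgf; rw [hf0, mul_zero]
      · have : (g : Sym2 V) ∉ ({(e : Sym2 V), (f : Sym2 V)} : Set (Sym2 V)) := by
          intro h
          rcases h with h | h
          · exact hg (Subtype.ext h)
          · exact hgf (Subtype.ext h)
        rw [← hu] at this
        have hz : edgeVal u (g : Sym2 V) = 0 := by
          by_contra hnz
          exact this ⟨g.2, hnz⟩
        rw [hz, zero_mul]
    · intro h
      exact absurd (Finset.mem_univ e) h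
  have hcne : ∃ e, d φ e ≠ 0 := by
    by_contra h
    push_neg at h
    apply hφ0
    apply LinearMap.ext
    intro w
    rw [hrepr φ w]
    simp [h]
  obtain ⟨e₀, he₀⟩ := hcne
  have hfull : ∀ f, d φ f ≠ 0 := hfullsupp φ hφann e₀ he₀
  -- vertex incidence sums
  have hvert : ∀ v : V,
      ∑ e ∈ Finset.univ.filter (fun e : ↥G.edgeSet => v ∈ (e : Sym2 V)), d φ e = 0 := by
    intro v
    have h1 := hannsum φ hφann (Pi.single v (1 : F))
    rw [← Finset.sum_filter_add_sum_filter_not Finset.univ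
      (fun e : ↥G.edgeSet => v ∈ (e : Sym2 V))] at h1
    have h2 : ∑ e ∈ Finset.univ.filter (fun e : ↥G.edgeSet => ¬ v ∈ (e : Sym2 V)),
        edgeVal (Pi.single v (1 : F)) (e : Sym2 V) * d φ e = 0 := by
      apply Finset.sum_eq_zero
      intro e he
      rw [edgeVal_single_of_not_mem (Finset.mem_filter.1 he).2, zero_mul]
    rw [h2, add_zero] at h1
    rw [← h1]
    refine (Finset.sum_congr rfl fun e he => ?_).symm
    rw [edgeVal_single_of_mem e.2 (Finset.mem_filter.1 he).2, one_mul]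
  -- the incidence filter has cardinality equal to the degree
  have hcardfilter : ∀ v : V,
      (Finset.univ.filter (fun e : ↥G.edgeSet => v ∈ (e : Sym2 V))).card = G.degree v := by
    intro v
    rw [← SimpleGraph.card_incidenceFinset_eq_degree]
    refine Finset.card_bij (fun (e : ↥G.edgeSet) _ => (e : Sym2 V)) ?_ ?_ ?_
    · intro e he
      rw [SimpleGraph.mem_incidenceFinset]
      exact ⟨e.2, (Finset.mem_filter.1 he).2⟩
    · intro e₁ _ e₂ _ h
      exact Subtype.ext h
    · intro e he
      rw [SimpleGraph.mem_incidenceFinset] at he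
      exact ⟨⟨e, he.1⟩, Finset.mem_filter.2 ⟨Finset.mem_univ _, he.2⟩, rfl⟩
  -- every vertex has degree at least 2
  obtain ⟨x₁, y₁, hadj₁⟩ : ∃ x y : V, G.Adj x y := by
    have he := e₀.2
    generalize (e₀ : Sym2 V) = e at he
    revert he
    induction e using Sym2.ind with
    | _ x y => exact fun he => ⟨x, y, G.mem_edgeSet.1 he⟩
  have hdeg2 : ∀ v : V, 2 ≤ G.degree v := by
    intro v
    have hpos : 0 < G.degree v := by
      rw [G.degree_pos_iff_exists_adj]
      rcases eq_or_ne v x₁ with rfl | hvx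
      · exact ⟨y₁, hadj₁⟩
      · obtain ⟨p⟩ := hconn v x₁
        cases p with
        | nil => exact absurd rfl hvx
        | @cons _ z _ h _ => exact ⟨z, h⟩
    rcases Nat.lt_or_ge (G.degree v) 2 with h | h
    · exfalso
      have h1 : G.degree v = 1 := by omega
      have h2 : (Finset.univ.filter (fun e : ↥G.edgeSet => v ∈ (e : Sym2 V))).card = 1 := by
        rw [hcardfilter v, h1]
      obtain ⟨e, he⟩ := Finset.card_eq_one.1 h2
      have := hvert v
      rw [he, Finset.sum_singleton] at this
      exact hfull e this
    · exact h
  have hple : Fintype.card V ≤ G.edgeFinset.card := by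
    have h1 := G.sum_degrees_eq_twice_card_edges
    have h2 : ∑ v : V, 2 ≤ ∑ v : V, G.degree v :=
      Finset.sum_le_sum fun v _ => hdeg2 v
    rw [Finset.sum_const, Finset.card_univ, smul_eq_mul] at h2
    omega
  -- the annihilator is at most one-dimensional
  have hann1 : finrank F ↥ann ≤ 1 := by
    have hle : ann ≤ Submodule.span F {φ} := by
      intro ψ hψ
      set χ : Module.Dual F (↥G.edgeSet → F) := d φ e₀ • ψ - d ψ e₀ • φ with hχdef
      have hχann : χ ∈ ann := sub_mem (Submodule.smul_mem _ _ hψ) (Submodule.smul_mem _ _ hφann)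
      have hdχ : ∀ f, d χ f = d φ e₀ * d ψ f - d ψ e₀ * d φ f := by
        intro f
        simp [hχdef, hddef]
      have hdχ0 : d χ e₀ = 0 := by rw [hdχ]; ring
      have hχ0 : χ = 0 := by
        by_contra h
        obtain ⟨w, hw⟩ : ∃ w, χ w ≠ 0 := by
          by_contra h'
          push_neg at h'
          exact h (LinearMap.ext h')
        have : ∃ f, d χ f ≠ 0 := by
          by_contra h'
          push_neg at h'
          apply hw
          rw [hrepr χ w]
          simp [h']
        obtain ⟨f, hf⟩ := this
        exact hfullsupp χ hχann f hf e₀ hdχ0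
      have hψeq : ψ = (d ψ e₀ / d φ e₀) • φ := by
        have h1 : d φ e₀ • ψ = d ψ e₀ • φ := by
          rwa [sub_eq_zero] at hχ0
        have h2 := congrArg (fun x => (d φ e₀)⁻¹ • x) h1
        simp only [smul_smul] at h2
        rw [inv_mul_cancel₀ (hfull e₀), one_smul] at h2
        rw [div_eq_inv_mul]; exact h2
      rw [hψeq]
      exact Submodule.smul_mem _ _ (Submodule.mem_span_singleton_self φ)
    calc finrank F ↥ann ≤ finrank F ↥(Submodule.span F {φ}) := Submodule.finrank_mono hle
      _ = 1 := finrank_span_singleton hφ0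
  have hannexact : finrank F ↥ann = 1 := le_antisymm hann1 hannpos
  have hWrank : finrank F ↥W + 1 = G.edgeFinset.card := by omega
  have hWle : finrank F ↥W ≤ Fintype.card V := by
    have := LinearMap.finrank_range_le Λ
    rwa [finrank_pi] at this
  refine ⟨by omega, ?_⟩
  -- now the case q = p
  intro hqp
  -- a nonzero kernel element
  have hker : ∃ u : V → F, u ≠ 0 ∧ ∀ ⦃x y : V⦄, G.Adj x y → u x + u y = 0 := by
    have h1 := LinearMap.finrank_range_add_finrank_ker Λ
    rw [finrank_pi] at h1
    have h2 : 0 < finrank F ↥(LinearMap.ker Λ) := by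
      rw [← hWdef] at h1
      omega
    have h3 : LinearMap.ker Λ ≠ ⊥ := by
      intro h
      rw [h] at h2
      simp [finrank_bot] at h2
    obtain ⟨u, hu, hu0⟩ := Submodule.exists_mem_ne_zero_of_ne_bot h3
    refine ⟨u, hu0, fun x y hxy => ?_⟩
    have := congrFun (LinearMap.mem_ker.1 hu) ⟨s(x, y), hxy⟩
    rw [hΛapp] at this
    exact this
  obtain ⟨u, hu0, hualt⟩ := hker
  obtain ⟨x₀, hx₀⟩ : ∃ x, u x ≠ 0 := Function.ne_iff.1 hu0
  have hnz : ∀ x, u x ≠ 0 := by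
    intro x
    obtain ⟨p⟩ := hconn x₀ x
    rw [sign_along hualt p]
    exact mul_ne_zero (pow_ne_zero _ (by norm_num)) hx₀
  -- all degrees are exactly 2
  have hdeg : ∀ v : V, G.degree v = 2 := by
    have h1 := G.sum_degrees_eq_twice_card_edges
    rw [hqp] at h1
    have h2 : ∑ _v : V, 2 = ∑ v : V, G.degree v := by
      rw [Finset.sum_const, Finset.card_univ, smul_eq_mul]
      omega
    intro v
    exact ((Finset.sum_eq_sum_iff_of_le fun i _ => hdeg2 i).1 h2 v (Finset.mem_univ v)).symm
  -- there exists a cycle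
  obtain ⟨v, c, hc⟩ : ∃ (v : V) (c : G.Walk v v), c.IsCycle := by
    by_contra h
    push_neg at h
    have hacyclic : G.IsAcyclic := fun v c => h v c
    have htree : G.IsTree := ⟨hconn, hacyclic⟩
    have := htree.card_edgeFinset
    omega
  -- every vertex is on the cycle
  have hall : ∀ x : V, x ∈ c.support := by
    by_contra h
    push_neg at h
    obtain ⟨x, hx⟩ := h
    obtain ⟨p⟩ := hconn v x
    obtain ⟨y, z, hy, hz, hyz⟩ :=
      exists_boundary {t : V | t ∈ c.support} p c.start_mem_support hx
    obtain ⟨a, b, hab, hya, hyb, hma, hmb⟩ := cycle_two_edges_at hc hy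
    have haS : a ∈ c.support := c.snd_mem_support_of_mem_edges hma
    have hbS : b ∈ c.support := c.snd_mem_support_of_mem_edges hmb
    have hza : z ≠ a := fun h => hz (h ▸ haS)
    have hzb : z ≠ b := fun h => hz (h ▸ hbS)
    have hsub : ({a, b, z} : Finset V) ⊆ G.neighborFinset y := by
      intro t ht
      rw [SimpleGraph.mem_neighborFinset]
      simp only [Finset.mem_insert, Finset.mem_singleton] at ht
      rcases ht with rfl | rfl | rfl
      · exact hya
      · exact hyb
      · exact hyz
    have hcard3 : ({a, b, z} : Finset V).card = 3 := by
      rw [Finset.card_insert_of_notMem (by simp [hab, hza.symm]),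
        Finset.card_insert_of_notMem (by simp [hzb.symm]), Finset.card_singleton]
    have := Finset.card_le_card hsub
    rw [hcard3, G.card_neighborFinset_eq_degree, hdeg y] at this
    omega
  -- every edge is on the cycle
  have hedges : ∀ e ∈ G.edgeSet, e ∈ c.edges := by
    intro e he
    induction e using Sym2.ind with
    | _ x y =>
      have hxy : G.Adj x y := G.mem_edgeSet.1 he
      obtain ⟨a, b, hab, hxa, hxb, hma, hmb⟩ := cycle_two_edges_at hc (hall x)
      have hsub : ({a, b} : Finset V) ⊆ G.neighborFinset x := by
        intro t ht
        rw [SimpleGraph.mem_neighborFinset]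
        simp only [Finset.mem_insert, Finset.mem_singleton] at ht
        rcases ht with rfl | rfl
        · exact hxa
        · exact hxb
      have hcard2 : ({a, b} : Finset V).card = 2 := by
        rw [Finset.card_insert_of_notMem (by simp [hab]), Finset.card_singleton]
      have heq : G.neighborFinset x = {a, b} := by
        apply (Finset.eq_of_subset_of_card_le hsub _).symm
        rw [hcard2, G.card_neighborFinset_eq_degree, hdeg x]
      have hy : y ∈ ({a, b} : Finset V) := by
        rw [← heq, SimpleGraph.mem_neighborFinset]
        exact hxy
      simp only [Finset.mem_insert, Finset.mem_singleton] at hy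
      rcases hy with rfl | rfl
      · exact hma
      · exact hmb
  -- the cycle has even length
  have heven : Even c.length := by
    have h1 := sign_along hualt c
    have h2 : ((-1 : F)) ^ c.length = 1 := by
      have h3 : ((-1 : F)) ^ c.length * u v = 1 * u v := by rw [one_mul, ← h1]
      exact mul_right_cancel₀ (hnz v) h3
    have hne : (-1 : F) ≠ 1 := by norm_num
    exact (neg_one_pow_eq_one_iff_even hne).1 h2
  exact ⟨v, c, hc, heven, hall, hedges⟩
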